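/- Let 𝒯^(n) := diag(T_j^(n) : j ∈ ℕ) act in ℰ^(n) := l²(E_j^(n) : j ∈ ℕ) ⊂ ℰ := l²(E_j : j ∈ ℕ). Suppose there is λ ∈ ⋂_{j,n} ρ(T_j^(n)) such that each sequence ((T_j^(n) − λ)⁻¹)_n is discretely compact and sup_n ‖(T_j^(n) − λ)⁻¹‖ → 0 as j → ∞. Then λ ∈ ⋂_n ρ(𝒯^(n)) and ((𝒯^(n) − λ)⁻¹)_n is discretely compact. -/

import Mathlib

open Filter Topology

/-- `R` is the resolvent of the closed operator given by its graph `G`. -/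
def IsResolventOfGraph {F : Type*} [NormedAddCommGroup F] [NormedSpace ℂ F]
    (G : Submodule ℂ (F × F)) (l : ℂ) (R : F →L[ℂ] F) : Prop :=
  (∀ p ∈ G, R (p.2 - l • p.1) = p.1) ∧
  (∀ y : F, (R y, y + l • R y) ∈ G)

/-- Stummel's notion of a **discretely compact sequence** of bounded operators
`A_n ∈ L(E_n)` with `E_n` closed subspaces of the Banach space `E₀` (here the
limit space is all of `E₀`, i.e. `E = E₀`). -/
def DiscretelyCompact {E₀ : Type*} [NormedAddCommGroup E₀] [NormedSpace ℂ E₀]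
    (En : ℕ → Submodule ℂ E₀) (A : ∀ n, En n →L[ℂ] En n) : Prop :=
  ∀ φ : ℕ → ℕ, StrictMono φ →
    ∀ x : ∀ m, En (φ m), (∃ M : ℝ, ∀ m, ‖x m‖ ≤ M) →
      ∃ ψ : ℕ → ℕ, StrictMono ψ ∧ ∃ y : E₀,
        Tendsto (fun m => ((A (φ (ψ m)) (x (ψ m)) : E₀))) atTop (𝓝 y)

lemma lp2_norm_le_of_le {F G : ℕ → Type*} [∀ j, NormedAddCommGroup (F j)]
    [∀ j, NormedAddCommGroup (G j)]
    (w : lp F 2) (v : lp G 2) {c : ℝ} (hc : 0 ≤ c) (h : ∀ j, ‖w j‖ ≤ c * ‖v j‖) :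
    ‖w‖ ≤ c * ‖v‖ := by
  have h2 : (0:ℝ) < (2 : ENNReal).toReal := by norm_num
  refine lp.norm_le_of_tsum_le h2 (mul_nonneg hc (norm_nonneg _)) ?_
  have hsum : ∀ j, ‖w j‖ ^ (2 : ENNReal).toReal
      ≤ c ^ (2 : ENNReal).toReal * ‖v j‖ ^ (2 : ENNReal).toReal := by
    intro j
    rw [← Real.mul_rpow hc (norm_nonneg _)]
    exact Real.rpow_le_rpow (norm_nonneg _) (h j) (le_of_lt h2)
  calc ∑' j, ‖w j‖ ^ (2 : ENNReal).toReal
      ≤ ∑' j, c ^ (2 : ENNReal).toReal * ‖v j‖ ^ (2 : ENNReal).toReal :=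
        Summable.tsum_le_tsum hsum ((lp.memℓp w).summable h2) (((lp.memℓp v).summable h2).mul_left _)
    _ = c ^ (2 : ENNReal).toReal * ∑' j, ‖v j‖ ^ (2 : ENNReal).toReal := tsum_mul_left
    _ = c ^ (2 : ENNReal).toReal * ‖v‖ ^ (2 : ENNReal).toReal := by
        rw [lp.norm_rpow_eq_tsum h2 v]
    _ = (c * ‖v‖) ^ (2 : ENNReal).toReal := (Real.mul_rpow hc (norm_nonneg _)).symm

lemma exists_diag_clm {F : ℕ → Type*} [∀ j, NormedAddCommGroup (F j)] [∀ j, NormedSpace ℂ (F j)]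
    (A : ∀ j, F j →L[ℂ] F j) (C : ℝ) (hA : ∀ j, ‖A j‖ ≤ C) :
    ∃ B : lp F 2 →L[ℂ] lp F 2, ∀ v j, B v j = A j (v j) := by
  have hC : 0 ≤ C := le_trans (norm_nonneg _) (hA 0)
  have h2 : (0:ℝ) < (2 : ENNReal).toReal := by norm_num
  have hcoord : ∀ (v : lp F 2) (j), ‖A j (v j)‖ ≤ C * ‖v j‖ := fun v j =>
    le_trans ((A j).le_opNorm (v j)) (mul_le_mul_of_nonneg_right (hA j) (norm_nonneg _))
  have key : ∀ v : lp F 2, Memℓp (fun j => A j (v j)) 2 := by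
    intro v
    apply memℓp_gen
    refine Summable.of_nonneg_of_le (fun j => Real.rpow_nonneg (norm_nonneg _) _)
      (fun j => ?_) ((((lp.memℓp v).summable h2).mul_left (C ^ (2:ENNReal).toReal)))
    rw [← Real.mul_rpow hC (norm_nonneg _)]
    exact Real.rpow_le_rpow (norm_nonneg _) (hcoord v j) (le_of_lt h2)
  let B₀ : lp F 2 →ₗ[ℂ] lp F 2 :=
    { toFun := fun v => ⟨fun j => A j (v j), key v⟩
      map_add' := fun v w => lp.ext (funext fun j => by
        show A j ((v + w) j) = A j (v j) + A j (w j)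
        rw [lp.coeFn_add, Pi.add_apply, map_add])
      map_smul' := fun c v => lp.ext (funext fun j => by
        show A j ((c • v) j) = c • A j (v j)
        rw [lp.coeFn_smul, Pi.smul_apply, map_smul]) }
  refine ⟨B₀.mkContinuous C (fun v => ?_), fun v j => rfl⟩
  exact lp2_norm_le_of_le (B₀ v) v hC (hcoord v)

lemma totallyBounded_of_near_compact {X : Type*} [MetricSpace X] {S : Set X}
    (h : ∀ ε : ℝ, 0 < ε → ∃ K : Set X, IsCompact K ∧ ∀ s ∈ S, ∃ k ∈ K, dist s k ≤ ε) :
    TotallyBounded S := by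
  rw [Metric.totallyBounded_iff]
  intro ε hε
  obtain ⟨K, hK, hSK⟩ := h (ε/3) (by linarith)
  obtain ⟨t, htf, htK⟩ := Metric.totallyBounded_iff.mp hK.totallyBounded (ε/3) (by linarith)
  refine ⟨t, htf, fun s hs => ?_⟩
  obtain ⟨k, hkK, hsk⟩ := hSK s hs
  obtain ⟨y, hy, hky⟩ := Set.mem_iUnion₂.mp (htK hkK)
  rw [Metric.mem_ball] at hky
  refine Set.mem_iUnion₂.mpr ⟨y, hy, ?_⟩
  rw [Metric.mem_ball]
  calc dist s y ≤ dist s k + dist k y := dist_triangle s k y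
    _ < ε := by linarith

lemma totallyBounded_range_of_subseq {X : Type*} [MetricSpace X] (v : ℕ → X)
    (h : ∀ g : ℕ → ℕ, StrictMono g → ∃ ψ : ℕ → ℕ, StrictMono ψ ∧ CauchySeq (v ∘ g ∘ ψ)) :
    TotallyBounded (Set.range v) := by
  by_contra hTB
  rw [Metric.totallyBounded_iff] at hTB
  push_neg at hTB
  obtain ⟨ε, hε, hsep⟩ := hTB
  have key : ∀ N : ℕ, ∃ m, N < m ∧ ∀ i ≤ N, ε ≤ dist (v m) (v i) := by
    intro N
    obtain ⟨z, hz1, hz2⟩ := Set.not_subset.mp (hsep (v '' {i | i ≤ N})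
      ((Set.finite_Iic N).image v))
    obtain ⟨m, rfl⟩ := hz1
    have hdist : ∀ i ≤ N, ε ≤ dist (v m) (v i) := by
      intro i hi
      by_contra hlt
      rw [not_le] at hlt
      exact hz2 (Set.mem_iUnion₂.mpr ⟨v i, ⟨i, hi, rfl⟩, Metric.mem_ball.mpr hlt⟩)
    rcases lt_or_ge N m with hm | hm
    · exact ⟨m, hm, hdist⟩
    · have := hdist m hm
      rw [dist_self] at this
      linarith
  choose f hf1 hf2 using key
  set g : ℕ → ℕ := fun k => Nat.rec (f 0) (fun _ prev => f prev) k with hg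
  have hgs : StrictMono g := strictMono_nat_of_lt_succ (fun k => hf1 (g k))
  have hsep2 : ∀ i k, i < k → ε ≤ dist (v (g k)) (v (g i)) := by
    intro i k hik
    cases k with
    | zero => omega
    | succ k' => exact hf2 (g k') (g i) (hgs.monotone (Nat.lt_succ_iff.mp hik))
  obtain ⟨ψ, hψ, hC⟩ := h g hgs
  obtain ⟨N, hN⟩ := Metric.cauchySeq_iff.mp hC ε hε
  have h1 := hN (N+1) (by omega) N (le_refl N)
  have h2 := hsep2 (ψ N) (ψ (N+1)) (hψ (by omega))
  simp only [Function.comp_apply] at h1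
  linarith

lemma lp_single_sub {F : ℕ → Type*} [∀ j, NormedAddCommGroup (F j)] (i : ℕ) (a b : F i) :
    lp.single (E := F) 2 i (a - b) = lp.single 2 i a - lp.single 2 i b := by
  refine lp.ext (funext fun j => ?_)
  rw [lp.coeFn_sub, Pi.sub_apply]
  by_cases h : j = i
  · subst h; simp [lp.single_apply_self]
  · simp [lp.single_apply_ne _ _ _ h]

lemma isometry_lp_single {F : ℕ → Type*} [∀ j, NormedAddCommGroup (F j)] (i : ℕ) :
    Isometry (fun a : F i => lp.single (E := F) 2 i a) := by
  refine Isometry.of_dist_eq fun a b => ?_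
  have h2 : (0:ℝ) < (2 : ENNReal).toReal := by norm_num
  have hn := lp.norm_single (E := F) (p := 2) (by norm_num) i (a - b)
  rw [dist_eq_norm, dist_eq_norm, ← lp_single_sub, hn]

lemma trunc_coord {F : ℕ → Type*} [∀ j, NormedAddCommGroup (F j)] (J : ℕ) (c : ∀ j, F j)
    (i : ℕ) :
    (∑ j ∈ Finset.range J, lp.single (E := F) 2 j (c j)) i
      = if i ∈ Finset.range J then c i else 0 := by
  simp only [lp.coeFn_sum, Finset.sum_apply, lp.single_apply, Finset.sum_pi_single]

lemma trunc_continuous {F : ℕ → Type*} [∀ j, NormedAddCommGroup (F j)] (J : ℕ) :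
    Continuous (fun c : ∀ j, F j => ∑ j ∈ Finset.range J, lp.single (E := F) 2 j (c j)) := by
  refine continuous_finset_sum _ fun j _ => ?_
  exact (isometry_lp_single j).continuous.comp (continuous_apply j)

section

variable {Ej : ℕ → Type*} [∀ j, NormedAddCommGroup (Ej j)]
  [∀ j, NormedSpace ℂ (Ej j)] [∀ j, CompleteSpace (Ej j)]
  (Ejn : ∀ j : ℕ, ℕ → Submodule ℂ (Ej j))
  (Tjn : ∀ j n : ℕ, ↥(Ejn j n) →ₗ.[ℂ] ↥(Ejn j n))

/-- The graph of the infinite diagonal operator matrix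
`𝒯⁽ⁿ⁾ = diag(T_j⁽ⁿ⁾ : j ∈ ℕ)` acting in `ℰ⁽ⁿ⁾ = l²(E_j⁽ⁿ⁾ : j ∈ ℕ)`,
with its natural maximal domain. -/
noncomputable def diagGraphLp (n : ℕ) :
    Submodule ℂ (↥(lp (fun j => ↥(Ejn j n)) 2) × ↥(lp (fun j => ↥(Ejn j n)) 2)) where
  carrier := {p | ∀ j : ℕ, (p.1 j, p.2 j) ∈ (Tjn j n).graph}
  add_mem' := fun hp hq j => (Tjn j n).graph.add_mem (hp j) (hq j)
  zero_mem' := fun j => (Tjn j n).graph.zero_mem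
  smul_mem' := fun c _ hp j => (Tjn j n).graph.smul_mem c (hp j)

/-- The inclusion `ℰ⁽ⁿ⁾ = l²(E_j⁽ⁿ⁾ : j) ↪ ℰ = l²(E_j : j)`. -/
noncomputable def inclLp (n : ℕ) (v : ↥(lp (fun j => ↥(Ejn j n)) 2)) : ↥(lp Ej 2) :=
  ⟨fun j => ((v j : Ej j)), by
    refine memℓp_gen ?_
    have h2 : (0 : ℝ) < (2 : ENNReal).toReal := by norm_num
    have hv := (memℓp_gen_iff h2).mp (lp.memℓp v)
    simpa using hv⟩

/-- **Infinite diagonal operator matrices with discretely compact resolvents.**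
If `λ ∈ ⋂_{j,n} ρ(T_j⁽ⁿ⁾)`, each sequence `((T_j⁽ⁿ⁾ − λ)⁻¹)_n` is discretely
compact, and `sup_n ‖(T_j⁽ⁿ⁾ − λ)⁻¹‖ → 0` as `j → ∞`, then
`λ ∈ ⋂_n ρ(𝒯⁽ⁿ⁾)` and `((𝒯⁽ⁿ⁾ − λ)⁻¹)_n` is discretely compact. -/
theorem stmt15
    (hEjn : ∀ j n, IsClosed ((Ejn j n : Set (Ej j))))
    (hTjn : ∀ j n, IsClosed (((Tjn j n).graph : Set (↥(Ejn j n) × ↥(Ejn j n)))))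
    (l : ℂ) (Rjn : ∀ j n : ℕ, ↥(Ejn j n) →L[ℂ] ↥(Ejn j n))
    (hRjn : ∀ j n, IsResolventOfGraph ((Tjn j n).graph) l (Rjn j n))
    (hdc : ∀ j, DiscretelyCompact (Ejn j) (Rjn j))
    (hdecay : ∀ ε : ℝ, 0 < ε → ∃ J : ℕ, ∀ j, J ≤ j → ∀ n, ‖Rjn j n‖ ≤ ε) :
    ∃ R : ∀ n, ↥(lp (fun j => ↥(Ejn j n)) 2) →L[ℂ] ↥(lp (fun j => ↥(Ejn j n)) 2),
      (∀ n, IsResolventOfGraph (diagGraphLp Ejn Tjn n) l (R n)) ∧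
      (∀ φ : ℕ → ℕ, StrictMono φ →
        ∀ x : ∀ m, ↥(lp (fun j => ↥(Ejn j (φ m))) 2),
          (∃ M : ℝ, ∀ m, ‖x m‖ ≤ M) →
          ∃ ψ : ℕ → ℕ, StrictMono ψ ∧ ∃ y : ↥(lp Ej 2),
            Tendsto (fun m =>
              inclLp Ejn (φ (ψ m)) (R (φ (ψ m)) (x (ψ m)))) atTop (𝓝 y)) := by
  obtain ⟨J₁, hJ₁⟩ := hdecay 1 one_pos
  set C : ℕ → ℝ := fun n => 1 + ∑ j ∈ Finset.range J₁, ‖Rjn j n‖ with hC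
  have hCb : ∀ n j, ‖Rjn j n‖ ≤ C n := by
    intro n j
    rcases lt_or_ge j J₁ with h | h
    · have h1 : ‖Rjn j n‖ ≤ ∑ i ∈ Finset.range J₁, ‖Rjn i n‖ :=
        Finset.single_le_sum (fun i _ => (Rjn i n).opNorm_nonneg) (Finset.mem_range.mpr h)
      simp only [hC]
      linarith
    · have h1 := hJ₁ j h n
      have h2 : (0:ℝ) ≤ ∑ i ∈ Finset.range J₁, ‖Rjn i n‖ :=
        Finset.sum_nonneg fun i _ => (Rjn i n).opNorm_nonneg
      simp only [hC]
      linarith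
  choose B hB using fun n => exists_diag_clm (fun j => Rjn j n) (C n) (hCb n)
  refine ⟨B, fun n => ⟨?_, ?_⟩, ?_⟩
  · rintro ⟨p1, p2⟩ hp
    refine lp.ext (funext fun j => ?_)
    show (B n (p2 - l • p1)) j = p1 j
    rw [hB n (p2 - l • p1) j]
    have hco : (p2 - l • p1) j = p2 j - l • p1 j := by
      rw [lp.coeFn_sub, Pi.sub_apply, lp.coeFn_smul, Pi.smul_apply]
    rw [hco]
    exact (hRjn j n).1 (p1 j, p2 j) (hp j)
  · intro y
    show ∀ j : ℕ, ((B n y) j, (y + l • B n y) j) ∈ (Tjn j n).graph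
    intro j
    have hco : (y + l • B n y) j = y j + l • (B n y) j := by
      rw [lp.coeFn_add, Pi.add_apply, lp.coeFn_smul, Pi.smul_apply]
    rw [hco, hB n y j]
    exact (hRjn j n).2 (y j)
  · intro φ hφ x hx
    obtain ⟨M, hM⟩ := hx
    have hM0 : 0 ≤ M := le_trans (norm_nonneg _) (hM 0)
    set u : ℕ → ↥(lp Ej 2) := fun m => inclLp Ejn (φ m) (B (φ m) (x m)) with hu
    have hucoord : ∀ m j, (u m) j = ((Rjn j (φ m)) (x m j) : Ej j) := by
      intro m j
      show ((B (φ m) (x m)) j : Ej j) = _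
      rw [hB]
    have hTcomp : ∀ j,
        IsCompact (closure (Set.range (fun m => ((Rjn j (φ m) (x m j) : Ej j))))) := by
      intro j
      refine TotallyBounded.isCompact_of_isClosed
        ((totallyBounded_range_of_subseq _ ?_).closure) isClosed_closure
      intro g hg
      obtain ⟨ψ, hψ, y, hy⟩ := hdc j (φ ∘ g) (hφ.comp hg) (fun m => x (g m) j)
        ⟨M, fun m => le_trans (lp.norm_apply_le_norm (by norm_num) (x (g m)) j) (hM (g m))⟩
      exact ⟨ψ, hψ, hy.cauchySeq⟩
    have main : TotallyBounded (Set.range u) := by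
      refine totallyBounded_of_near_compact fun ε hε => ?_
      set ε' := ε / (M + 1) with hε'
      have hε'0 : 0 < ε' := by positivity
      obtain ⟨J, hJ⟩ := hdecay ε' hε'0
      refine ⟨(fun c : ∀ j, Ej j => ∑ j ∈ Finset.range J, lp.single 2 j (c j)) ''
        (Set.univ.pi fun j => closure (Set.range (fun m => ((Rjn j (φ m) (x m j) : Ej j))))),
        (isCompact_univ_pi hTcomp).image (trunc_continuous J), ?_⟩
      rintro s ⟨m, rfl⟩
      set k : ↥(lp Ej 2) := ∑ j ∈ Finset.range J, lp.single 2 j ((u m) j) with hk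
      refine ⟨k, ⟨fun j => (u m) j, fun j _ => ?_, rfl⟩, ?_⟩
      · show (u m) j ∈ closure (Set.range fun m' => ((Rjn j (φ m') (x m' j) : Ej j)))
        rw [hucoord m j]
        exact subset_closure ⟨m, rfl⟩
      · rw [dist_eq_norm]
        have hle : ∀ i, ‖(u m - k) i‖ ≤ ε' * ‖x m i‖ := by
          intro i
          have hcoord : (u m - k) i = (u m) i -
              (if i ∈ Finset.range J then (u m) i else 0) := by
            rw [lp.coeFn_sub, Pi.sub_apply, hk, trunc_coord]
          rw [hcoord]
          by_cases hi : i ∈ Finset.range J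
          · rw [if_pos hi, sub_self, norm_zero]
            positivity
          · rw [if_neg hi, sub_zero, hucoord m i]
            have hnc : ‖((Rjn i (φ m) (x m i) : Ejn i (φ m)) : Ej i)‖
                = ‖Rjn i (φ m) (x m i)‖ := rfl
            rw [hnc]
            calc ‖Rjn i (φ m) (x m i)‖ ≤ ‖Rjn i (φ m)‖ * ‖x m i‖ :=
                  (Rjn i (φ m)).le_opNorm _
              _ ≤ ε' * ‖x m i‖ := mul_le_mul_of_nonneg_right
                  (hJ i (not_lt.mp (fun hc => hi (Finset.mem_range.mpr hc))) (φ m))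
                  (norm_nonneg _)
        calc ‖u m - k‖ ≤ ε' * ‖x m‖ := lp2_norm_le_of_le (u m - k) (x m) hε'0.le hle
          _ ≤ ε' * (M + 1) := by
              have := hM m
              nlinarith
          _ = ε := by
              rw [hε']
              field_simp
    obtain ⟨y, -, ψ, hψ, hy⟩ := (TotallyBounded.isCompact_of_isClosed main.closure
      isClosed_closure).tendsto_subseq (fun m => subset_closure (Set.mem_range_self m))
    exact ⟨ψ, hψ, y, hy⟩

end
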